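/- Let 2 ≤ n ≤ r, let s = gcd(n, r), and write n = x·s, r = y·s with gcd(x,y) = 1. Assume both x and y are odd. For i = 1, …, s define the vectors v_i ∈ ℚʳ by v_i = Σ_{ℓ=0}^{y−1} (−1)^ℓ e_{i+ℓs}, where e_1, …, e_r is the standard basis of ℚʳ. Then v_1, …, v_s form a basis of the eigenspace {v ∈ ℚʳ : S_rⁿ·v = −v} of S_rⁿ for the eigenvalue −1. -/

import Mathlib

lemma negpow {a b : ℕ} (h : a % 2 = b % 2) : (-1:ℚ)^a = (-1)^b := by
  rw [← Nat.div_add_mod a 2, ← Nat.div_add_mod b 2, pow_add, pow_add, pow_mul, pow_mul, h]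
  norm_num

lemma aux_parity (x y L : ℕ) (hxo : Odd x) (hyo : Odd y) :
    ((L + x)/y + 1) % 2 = (L + (L+x) % y) % 2 := by
  obtain ⟨a, ha⟩ := hxo
  obtain ⟨b, hb⟩ := hyo
  have h1 : y * ((L+x)/y) + (L+x) % y = L + x := Nat.div_add_mod _ _
  have h2 : y * ((L+x)/y) = 2*(b*((L+x)/y)) + ((L+x)/y) := by rw [hb]; ring
  omega

lemma aux_key (n r x y s t : ℕ) (hspos : 0 < s) (hx : n = x*s) (hy : r = y*s)
    (hxo : Odd x) (hyo : Odd y) :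
    ((t+n)/r + 1) % 2 = (t/s + ((t+n)%r)/s) % 2 := by
  have hns : (t+n)/s = t/s + x := by rw [hx, Nat.add_mul_div_right _ _ hspos]
  have h1 : ((t+n)%r)/s = (t/s + x) % y := by
    rw [hy, mul_comm y s, Nat.mod_mul_right_div_self, hns]
  have h2 : (t+n)/r = (t/s + x)/y := by
    rw [hy, mul_comm y s, ← Nat.div_div_eq_div_mul, hns]
  rw [h1, h2]
  have := aux_parity x y (t/s) hxo hyo
  omega

-- single step matrix lemma
lemma shift1 (r : ℕ) (hr : 0 < r) (Sr : Matrix (Fin r) (Fin r) ℚ)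
    (hSr : ∀ i j : Fin r, Sr i j =
      if (i : ℕ) + 1 = (j : ℕ) then 1
      else if (i : ℕ) = r - 1 ∧ (j : ℕ) = 0 then -1 else 0)
    (w : Fin r → ℚ) (t : Fin r) :
    Sr.mulVec w t = (-1:ℚ)^(((t:ℕ)+1)/r) * w ⟨((t:ℕ)+1) % r, Nat.mod_lt _ hr⟩ := by
  rw [Matrix.mulVec, dotProduct]
  have htlt := t.isLt
  by_cases h : (t:ℕ) = r - 1
  · have h1 : ((t:ℕ)+1) = r := by omega
    have h2 : ((t:ℕ)+1) % r = 0 := by rw [h1, Nat.mod_self]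
    have h3 : ((t:ℕ)+1) / r = 1 := by rw [h1, Nat.div_self hr]
    have e1 : (⟨((t:ℕ)+1)%r, Nat.mod_lt _ hr⟩ : Fin r) = ⟨0, hr⟩ := Fin.ext (by simp [h2])
    rw [e1, h3]
    rw [Finset.sum_eq_single (⟨0, hr⟩ : Fin r)]
    · rw [hSr]
      have hne : ¬ ((t:ℕ)+1 = ((⟨0, hr⟩ : Fin r):ℕ)) := by simp
      simp only [hne, if_false, h, if_true]
      simp
    · intro j _ hj
      rw [hSr]
      have e2 : ¬ ((t:ℕ)+1 = (j:ℕ)) := by have := j.isLt; omega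
      have e3 : ¬ ((j:ℕ) = 0) := fun hh => hj (Fin.ext hh)
      simp [e2, e3]
    · simp
  · have ht1 : (t:ℕ)+1 < r := by omega
    have h2 : ((t:ℕ)+1) % r = (t:ℕ)+1 := Nat.mod_eq_of_lt ht1
    have h3 : ((t:ℕ)+1) / r = 0 := Nat.div_eq_of_lt ht1
    have e1 : (⟨((t:ℕ)+1)%r, Nat.mod_lt _ hr⟩ : Fin r) = ⟨(t:ℕ)+1, ht1⟩ := Fin.ext (by simp [h2])
    rw [e1, h3]
    rw [Finset.sum_eq_single (⟨(t:ℕ)+1, ht1⟩ : Fin r)]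
    · rw [hSr]; simp
    · intro j _ hj
      rw [hSr]
      have e2 : ¬ ((t:ℕ)+1 = (j:ℕ)) := fun hh => hj (Fin.ext hh.symm)
      simp only [e2, if_false]
      have e3 : ¬ ((t:ℕ) = r - 1) := h
      simp [e3]
    · simp

lemma shiftk (r : ℕ) (hr : 0 < r) (Sr : Matrix (Fin r) (Fin r) ℚ)
    (hSr : ∀ i j : Fin r, Sr i j =
      if (i : ℕ) + 1 = (j : ℕ) then 1
      else if (i : ℕ) = r - 1 ∧ (j : ℕ) = 0 then -1 else 0)
    (k : ℕ) (w : Fin r → ℚ) (t : Fin r) :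
    (Sr ^ k).mulVec w t = (-1:ℚ)^(((t:ℕ)+k)/r) * w ⟨((t:ℕ)+k) % r, Nat.mod_lt _ hr⟩ := by
  induction k generalizing w t with
  | zero =>
    simp only [pow_zero, Matrix.one_mulVec, Nat.add_zero]
    have h1 : (⟨(t:ℕ) % r, Nat.mod_lt _ hr⟩ : Fin r) = t := Fin.ext (Nat.mod_eq_of_lt t.isLt)
    rw [Nat.div_eq_of_lt t.isLt, h1]
    simp
  | succ k ih =>
    rw [pow_succ', ← Matrix.mulVec_mulVec, shift1 r hr Sr hSr, ih]
    set a := (t:ℕ)+1 with ha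
    have hq : a % r + a / r * r = a := Nat.mod_add_div' a r
    have hmod : (a % r + k) % r = ((t:ℕ) + (k+1)) % r := by
      rw [Nat.mod_add_mod]; congr 1; omega
    have hdiv : a/r + (a % r + k)/r = ((t:ℕ)+(k+1))/r := by
      have : (t:ℕ)+(k+1) = a % r + k + a/r * r := by omega
      rw [this, Nat.add_mul_div_right _ _ hr]; ring
    rw [← mul_assoc, ← pow_add, hdiv]
    congr 1
    exact congrArg w (Fin.ext (by simpa using hmod))

open Matrix

/-- with `s = gcd(n,r)`, `n = x·s`, `r = y·s`, `x, y` odd, the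
vectors `v_i = Σ_{ℓ=0}^{y-1} (-1)^ℓ e_{i+ℓs}` (`i = 1,…,s`; here 0-based:
`v i` has entry `(-1)^ℓ` at position `i + ℓ·s` for `i : Fin s`) form a basis
of the `-1` eigenspace of `S_rⁿ`. -/
theorem stmt_17 (n r x y s : ℕ) (hn : 2 ≤ n) (hnr : n ≤ r)
    (hs : s = Nat.gcd n r) (hx : n = x * s) (hy : r = y * s)
    (hxy : Nat.gcd x y = 1) (hxo : Odd x) (hyo : Odd y)
    (Sr : Matrix (Fin r) (Fin r) ℚ)
    (hSr : ∀ i j : Fin r, Sr i j =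
      if (i : ℕ) + 1 = (j : ℕ) then 1
      else if (i : ℕ) = r - 1 ∧ (j : ℕ) = 0 then -1 else 0)
    (v : Fin s → (Fin r → ℚ))
    (hv : ∀ (i : Fin s) (t : Fin r), v i t =
      ∑ ℓ ∈ Finset.range y, (-1 : ℚ) ^ ℓ * (if (t : ℕ) = (i : ℕ) + ℓ * s then 1 else 0)) :
    LinearIndependent ℚ v ∧
    (∀ i : Fin s, (Sr ^ n).mulVec (v i) = -(v i)) ∧
    (∀ w : Fin r → ℚ, (Sr ^ n).mulVec w = -w → w ∈ Submodule.span ℚ (Set.range v)) := by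
  have hspos : 0 < s := by
    rcases Nat.eq_zero_or_pos s with h0 | h0
    · rw [h0, mul_zero] at hx; omega
    · exact h0
  have hrpos : 0 < r := by omega
  have hypos : 0 < y := by
    rcases Nat.eq_zero_or_pos y with h0 | h0
    · rw [h0, zero_mul] at hy; omega
    · exact h0
  have hle : s ≤ r := by
    rw [hy]; calc s = 1 * s := (one_mul s).symm
      _ ≤ y * s := Nat.mul_le_mul_right s hypos
  -- closed form of v
  have hv' : ∀ (i : Fin s) (t : Fin r),
      v i t = if (t:ℕ) % s = (i:ℕ) then (-1:ℚ)^((t:ℕ)/s) else 0 := by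
    intro i t
    rw [hv]
    by_cases hc : (t:ℕ) % s = (i:ℕ)
    · have hdm : (i:ℕ) + (t:ℕ)/s * s = (t:ℕ) := by
        have := Nat.mod_add_div' (t:ℕ) s; omega
      have hdivlt : (t:ℕ)/s < y := by
        rw [Nat.div_lt_iff_lt_mul hspos]; exact lt_of_lt_of_le t.isLt hy.le
      rw [Finset.sum_eq_single ((t:ℕ)/s)]
      · rw [if_pos hdm.symm, if_pos hc, mul_one]
      · intro ℓ _ hne
        have : ¬ ((t:ℕ) = (i:ℕ) + ℓ * s) := by
          intro he
          apply hne
          rw [he, Nat.add_mul_div_right _ _ hspos, Nat.div_eq_of_lt i.isLt, zero_add]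
        simp [this]
      · intro habs
        exact absurd (Finset.mem_range.mpr hdivlt) habs
    · rw [if_neg hc]
      apply Finset.sum_eq_zero
      intro ℓ _
      have : ¬ ((t:ℕ) = (i:ℕ) + ℓ * s) := by
        intro he
        apply hc
        rw [he, Nat.add_mul_mod_self_right, Nat.mod_eq_of_lt i.isLt]
      simp [this]
  have hsdvdr : s ∣ r := ⟨y, by rw [hy, mul_comm]⟩
  -- residues are preserved under shift by n
  have hms : ∀ t : Fin r, (((t:ℕ) + n) % r) % s = (t:ℕ) % s := by
    intro t
    rw [Nat.mod_mod_of_dvd _ hsdvdr, hx, Nat.add_mul_mod_self_right]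
  -- eigenvalue property
  have heig : ∀ i : Fin s, (Sr ^ n).mulVec (v i) = -(v i) := by
    intro i
    funext t
    rw [shiftk r hrpos Sr hSr n (v i) t, Pi.neg_apply, hv' i, hv' i]
    simp only [Fin.val_mk]
    rw [hms t]
    by_cases hc : (t:ℕ) % s = (i:ℕ)
    · rw [if_pos hc, if_pos hc, ← pow_add]
      have hkey := aux_key n r x y s (t:ℕ) hspos hx hy hxo hyo
      have : -(-1:ℚ)^((t:ℕ)/s) = (-1)^((t:ℕ)/s + 1) := by rw [pow_succ]; ring
      rw [this]
      exact negpow (by omega)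
    · rw [if_neg hc, if_neg hc, mul_zero, neg_zero]
  refine ⟨?_, heig, ?_⟩
  · -- linear independence
    rw [Fintype.linearIndependent_iff]
    intro g hg i
    have hlt : (i:ℕ) < r := lt_of_lt_of_le i.isLt hle
    have := congrFun hg ⟨(i:ℕ), hlt⟩
    rw [Finset.sum_apply] at this
    simp only [Pi.smul_apply, smul_eq_mul, Pi.zero_apply] at this
    rw [Finset.sum_eq_single i] at this
    · rw [hv'] at this
      simp only [Fin.val_mk] at this
      rw [Nat.mod_eq_of_lt i.isLt, if_pos rfl, Nat.div_eq_of_lt i.isLt, pow_zero,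
        mul_one] at this
      exact this
    · intro j _ hj
      rw [hv']
      simp only [Fin.val_mk]
      rw [Nat.mod_eq_of_lt i.isLt, if_neg (fun hh => hj (Fin.ext hh.symm)), mul_zero]
    · intro habs
      exact absurd (Finset.mem_univ i) habs
  · -- spanning
    intro w hw
    -- single step
    have step1 : ∀ t : Fin r, w ⟨((t:ℕ) + n) % r, Nat.mod_lt _ hrpos⟩ =
        (-1:ℚ)^((t:ℕ)/s + (((t:ℕ) + n) % r)/s) * w t := by
      intro t
      have e := congrFun hw t
      rw [shiftk r hrpos Sr hSr n w t, Pi.neg_apply] at e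
      set S1 : ℚ := (-1:ℚ)^(((t:ℕ)+n)/r) with hS1
      set S2 : ℚ := (-1:ℚ)^((t:ℕ)/s + (((t:ℕ)+n)%r)/s) with hS2def
      have hsq : S1 * S1 = 1 := by
        rw [hS1, ← pow_add]
        rw [negpow (a := ((t:ℕ)+n)/r + ((t:ℕ)+n)/r) (b := 0) (by omega)]
        exact pow_zero _
      have hsgn : S1 * S2 = -1 := by
        rw [hS1, hS2def, ← pow_add]
        have hkey := aux_key n r x y s (t:ℕ) hspos hx hy hxo hyo
        rw [negpow (b := 1) (by omega)]
        exact pow_one _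
      have hS2 : S2 = -S1 := by
        calc S2 = S2 * (S1 * S1) := by rw [hsq, mul_one]
          _ = (S1 * S2) * S1 := by ring
          _ = -1 * S1 := by rw [hsgn]
          _ = -S1 := by ring
      calc w ⟨((t:ℕ) + n) % r, Nat.mod_lt _ hrpos⟩
          = (S1 * S1) * w ⟨((t:ℕ) + n) % r, Nat.mod_lt _ hrpos⟩ := by rw [hsq, one_mul]
        _ = S1 * (S1 * w ⟨((t:ℕ) + n) % r, Nat.mod_lt _ hrpos⟩) := by ring
        _ = S1 * (-(w t)) := by rw [e]
        _ = (-S1) * w t := by ring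
        _ = S2 * w t := by rw [hS2]
    -- iterated step
    have stepk : ∀ k : ℕ, ∀ t : Fin r, w ⟨((t:ℕ) + k * n) % r, Nat.mod_lt _ hrpos⟩ =
        (-1:ℚ)^((t:ℕ)/s + (((t:ℕ) + k * n) % r)/s) * w t := by
      intro k
      induction k with
      | zero =>
        intro t
        have h0 : ((t:ℕ) + 0 * n) % r = (t:ℕ) := by
          rw [zero_mul, add_zero, Nat.mod_eq_of_lt t.isLt]
        simp only [h0, Fin.eta]
        rw [show (t:ℕ)/s + (t:ℕ)/s = 2 * ((t:ℕ)/s) by ring, pow_mul]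
        norm_num
      | succ k ih =>
        intro t
        set t' : Fin r := ⟨((t:ℕ) + k * n) % r, Nat.mod_lt _ hrpos⟩ with ht'
        have h1 := step1 t'
        have ih' := ih t
        have hval : (t':ℕ) = ((t:ℕ) + k * n) % r := rfl
        have hidx : ((t':ℕ) + n) % r = ((t:ℕ) + (k+1) * n) % r := by
          rw [hval, Nat.mod_add_mod]
          congr 1
          ring
        simp only [hidx] at h1
        rw [ih'] at h1
        rw [h1, ← mul_assoc, ← pow_add]
        congr 1
        exact negpow (by have hj : (t':ℕ)/s = (((t:ℕ) + k * n) % r)/s := congrArg (fun m => m / s) hval; omega)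
    -- constancy along residue classes
    have hconst : ∀ t : Fin r, w t =
        (-1:ℚ)^((t:ℕ)/s) * w ⟨(t:ℕ) % s, lt_of_lt_of_le (Nat.mod_lt _ hspos) hle⟩ := by
      intro t
      set L := (t:ℕ)/s with hL
      set i := (t:ℕ) % s with hi
      have hLlt : L < y := by
        rw [hL, Nat.div_lt_iff_lt_mul hspos]; exact lt_of_lt_of_le t.isLt hy.le
      haveI : NeZero y := ⟨by omega⟩
      have hunit : IsUnit (x : ZMod y) := (ZMod.isUnit_iff_coprime x y).mpr hxy
      set k := ((L : ZMod y) * (↑hunit.unit⁻¹ : ZMod y)).val with hk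
      have hkx : (k * x) % y = L := by
        have hcast : ((k * x : ℕ) : ZMod y) = ((L : ℕ) : ZMod y) := by
          push_cast
          rw [hk]
          rw [ZMod.natCast_val, ZMod.cast_id]
          rw [mul_assoc, hunit.val_inv_mul, mul_one]
        have := congrArg ZMod.val hcast
        rwa [ZMod.val_natCast, ZMod.val_natCast, Nat.mod_eq_of_lt hLlt] at this
      set q := k * x / y with hq
      have e : k * x = y * q + L := by
        have h := Nat.div_add_mod (k * x) y
        rw [hkx] at h
        rw [hq]
        omega
      have hlt2 : i + L * s < r := by
        have h1 : i < s := Nat.mod_lt _ hspos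
        have h2 : (L + 1) * s ≤ y * s := Nat.mul_le_mul_right s hLlt
        calc i + L * s < s + L * s := by omega
          _ = (L + 1) * s := by ring
          _ ≤ y * s := h2
          _ = r := hy.symm
      have e2 : i + k * n = (i + L * s) + q * r := by
        rw [hx, hy]
        calc i + k * (x * s) = i + (k * x) * s := by ring
          _ = i + (y * q + L) * s := by rw [e]
          _ = (i + L * s) + q * (y * s) := by ring
      have e3 : i + L * s = (t:ℕ) := by
        have h := Nat.div_add_mod (t:ℕ) s
        rw [← hL, ← hi] at h
        have hcomm : L * s = s * L := mul_comm _ _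
        omega
      have hidx : (i + k * n) % r = (t:ℕ) := by
        rw [e2, Nat.add_mul_mod_self_right, Nat.mod_eq_of_lt hlt2, e3]
      have hsk := stepk k ⟨i, lt_of_lt_of_le (Nat.mod_lt _ hspos) hle⟩
      simp only [Fin.val_mk, hidx, Fin.eta] at hsk
      rw [hsk, Nat.div_eq_of_lt (Nat.mod_lt (t:ℕ) hspos), zero_add]
    -- w is a combination of the v i
    have hrepr : w = ∑ i : Fin s, w ⟨(i:ℕ), lt_of_lt_of_le i.isLt hle⟩ • v i := by
      funext t
      rw [Finset.sum_apply]
      simp only [Pi.smul_apply, smul_eq_mul]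
      rw [Finset.sum_eq_single (⟨(t:ℕ) % s, Nat.mod_lt _ hspos⟩ : Fin s)]
      · rw [hv', hconst t]
        simp [mul_comm]
      · intro j _ hj
        rw [hv']
        have : ¬ ((t:ℕ) % s = (j:ℕ)) := fun hh => hj (Fin.ext hh.symm)
        rw [if_neg this, mul_zero]
      · intro habs
        exact absurd (Finset.mem_univ _) habs
    rw [hrepr]
    exact Submodule.sum_mem _ (fun i _ =>
      Submodule.smul_mem _ _ (Submodule.subset_span ⟨i, rfl⟩))
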